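/- arXiv:1509.05892 — 7 statements merged into one kernel-verified Lean document; each statement's English description precedes it below -/
import Mathlib

section
/- (Casorati determinant D_2, type q-E_6^{(1)}.) Suppose Y, Ȳ ∈ ℂ[[X]] satisfy (1−a_1X)·Ȳ = (1−b_1X)·Y, let (P, Q) be a Padé pair for Y and (P̄, Q̄) a Padé pair for Ȳ. Then there exists a constant c ∈ ℂ such that (1−b_1X)·P·Q̄ − (1−a_1X)·P̄·Q = c·X^{m+n+1}. -/
open Polynomial

/-- Casorati determinant `D_2` for type q-E_6^{(1)}. -/
theorem casorati_D2_qE6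
    (q a1 a2 a3 b1 b2 b3 : ℂ) (m n : ℕ)
    (Y Ybar : PowerSeries ℂ)
    (hYY : (1 - PowerSeries.C a1 * PowerSeries.X) * Ybar =
      (1 - PowerSeries.C b1 * PowerSeries.X) * Y)
    (P Q : Polynomial ℂ) (hdP : P.degree ≤ m) (hdQ : Q.degree ≤ n)
    (hPade : (PowerSeries.X : PowerSeries ℂ) ^ (m + n + 1) ∣
      Y * (Q : PowerSeries ℂ) - (P : PowerSeries ℂ))
    (Pbar Qbar : Polynomial ℂ) (hdPbar : Pbar.degree ≤ m) (hdQbar : Qbar.degree ≤ n)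
    (hPadebar : (PowerSeries.X : PowerSeries ℂ) ^ (m + n + 1) ∣
      Ybar * (Qbar : PowerSeries ℂ) - (Pbar : PowerSeries ℂ)) :
    ∃ c : ℂ,
      (1 - C b1 * X) * P * Qbar - (1 - C a1 * X) * Pbar * Q =
        C c * X ^ (m + n + 1) := by
  set D : Polynomial ℂ := (1 - C b1 * X) * P * Qbar - (1 - C a1 * X) * Pbar * Q with hD
  obtain ⟨A, hA⟩ := hPade
  obtain ⟨B, hB⟩ := hPadebar
  -- divisibility in power series
  have hps : (PowerSeries.X : PowerSeries ℂ) ^ (m + n + 1) ∣ (D : PowerSeries ℂ) := by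
    refine ⟨(1 - PowerSeries.C a1 * PowerSeries.X) * (Q : PowerSeries ℂ) * B
      - (1 - PowerSeries.C b1 * PowerSeries.X) * (Qbar : PowerSeries ℂ) * A, ?_⟩
    have : (D : PowerSeries ℂ) =
        (1 - PowerSeries.C b1 * PowerSeries.X) * (P : PowerSeries ℂ) * (Qbar : PowerSeries ℂ)
        - (1 - PowerSeries.C a1 * PowerSeries.X) * (Pbar : PowerSeries ℂ) * (Q : PowerSeries ℂ) := by
      simp [hD, Polynomial.coe_sub, Polynomial.coe_mul, Polynomial.coe_one,
        Polynomial.coe_X, Polynomial.coe_C]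
    rw [this]
    linear_combination (-(1 - PowerSeries.C b1 * PowerSeries.X) * (Qbar : PowerSeries ℂ)) * hA
      + ((1 - PowerSeries.C a1 * PowerSeries.X) * (Q : PowerSeries ℂ)) * hB
      - ((Q : PowerSeries ℂ) * (Qbar : PowerSeries ℂ)) * hYY
  -- transfer divisibility to polynomials
  have hpoly : (X : Polynomial ℂ) ^ (m + n + 1) ∣ D := by
    rw [Polynomial.X_pow_dvd_iff]
    rw [PowerSeries.X_pow_dvd_iff] at hps
    intro d hd
    simpa using hps d hd
  obtain ⟨E, hE⟩ := hpoly
  -- degree bound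
  have hdeg : D.degree ≤ ((m + n + 1 : ℕ) : WithBot ℕ) := by
    refine le_trans (degree_sub_le _ _) ?_
    have h1 : ((1 - C b1 * X) * P * Qbar).degree ≤ ((m + n + 1 : ℕ) : WithBot ℕ) := by
      refine le_trans (degree_mul_le _ _) ?_
      refine le_trans (add_le_add (degree_mul_le _ _) hdQbar) ?_
      have hb : (1 - C b1 * X).degree ≤ 1 := by
        refine le_trans (degree_sub_le _ _) (max_le ?_ ?_)
        · simp [degree_one]
        · refine le_trans (degree_mul_le _ _) ?_
          rw [degree_X]
          exact le_trans (add_le_add_left degree_C_le 1) (by norm_num)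
      calc (1 - C b1 * X).degree + P.degree + (n : WithBot ℕ)
          ≤ (1 : WithBot ℕ) + (m : WithBot ℕ) + (n : WithBot ℕ) := by
            exact add_le_add (add_le_add hb hdP) le_rfl
        _ = ((m + n + 1 : ℕ) : WithBot ℕ) := by
            push_cast; ring
    have h2 : ((1 - C a1 * X) * Pbar * Q).degree ≤ ((m + n + 1 : ℕ) : WithBot ℕ) := by
      refine le_trans (degree_mul_le _ _) ?_
      refine le_trans (add_le_add (degree_mul_le _ _) hdQ) ?_
      have hb : (1 - C a1 * X).degree ≤ 1 := by
        refine le_trans (degree_sub_le _ _) (max_le ?_ ?_)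
        · simp [degree_one]
        · refine le_trans (degree_mul_le _ _) ?_
          rw [degree_X]
          exact le_trans (add_le_add_left degree_C_le 1) (by norm_num)
      calc (1 - C a1 * X).degree + Pbar.degree + (n : WithBot ℕ)
          ≤ (1 : WithBot ℕ) + (m : WithBot ℕ) + (n : WithBot ℕ) := by
            exact add_le_add (add_le_add hb hdPbar) le_rfl
        _ = ((m + n + 1 : ℕ) : WithBot ℕ) := by
            push_cast; ring
    exact max_le h1 h2
  -- E is a constant
  by_cases hE0 : E = 0
  · exact ⟨0, by simp [hE, hE0]⟩
  · have hD0 : D ≠ 0 := by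
      rw [hE]
      exact mul_ne_zero (pow_ne_zero _ X_ne_zero) hE0
    have hnd : D.natDegree ≤ m + n + 1 := natDegree_le_iff_degree_le.mpr hdeg
    have hndE : E.natDegree = 0 := by
      have h := natDegree_mul (pow_ne_zero (m + n + 1) (X_ne_zero (R := ℂ))) hE0
      rw [← hE, natDegree_X_pow] at h
      omega
    refine ⟨E.coeff 0, ?_⟩
    rw [hE, ← Polynomial.eq_C_of_natDegree_le_zero hndE.le, mul_comm]
end

section
/- (Casorati determinant D_3, type q-E_6^{(1)}.) Suppose Y, Ȳ ∈ ℂ[[X]] satisfy both (1−a_1X)(1−a_2X)(1−a_3X)·Y(qX) = (1−b_1X)(1−b_2X)(1−b_3X)·Y and (1−a_1X)·Ȳ = (1−b_1X)·Y, let (P, Q) be a Padé pair for Y and (P̄, Q̄) a Padé pair for Ȳ. Then there exists a polynomial R ∈ ℂ[X] with deg R ≤ 1 such that (1−a_2X)(1−a_3X)·P(qX)·Q̄(X) − (1−b_2X)(1−b_3X)·P̄(X)·Q(qX) = X^{m+n+1}·R. -/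
open Polynomial

lemma coe_comp_C_mul_X (q : ℂ) (P : ℂ[X]) :
    ((P.comp (C q * X) : ℂ[X]) : PowerSeries ℂ) = PowerSeries.rescale q (P : PowerSeries ℂ) := by
  induction P using Polynomial.induction_on' with
  | add p r hp hr => simp [add_comp, hp, hr]
  | monomial k a =>
      rw [monomial_comp, Polynomial.coe_mul, Polynomial.coe_pow, Polynomial.coe_mul,
        Polynomial.coe_C, Polynomial.coe_C, Polynomial.coe_X, Polynomial.coe_monomial]
      ext j
      simp only [PowerSeries.coeff_rescale, PowerSeries.coeff_monomial, mul_pow, ← map_pow,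
        PowerSeries.coeff_C_mul, PowerSeries.coeff_X_pow]
      split <;> simp_all [mul_comm]

/-- Casorati determinant `D_3` for type q-E_6^{(1)}. -/
theorem casorati_D3_qE6
    (q a1 a2 a3 b1 b2 b3 : ℂ) (m n : ℕ)
    (Y Ybar : PowerSeries ℂ)
    (hY : (1 - PowerSeries.C a1 * PowerSeries.X) * (1 - PowerSeries.C a2 * PowerSeries.X) *
        (1 - PowerSeries.C a3 * PowerSeries.X) * PowerSeries.rescale q Y =
      (1 - PowerSeries.C b1 * PowerSeries.X) * (1 - PowerSeries.C b2 * PowerSeries.X) *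
        (1 - PowerSeries.C b3 * PowerSeries.X) * Y)
    (hYY : (1 - PowerSeries.C a1 * PowerSeries.X) * Ybar =
      (1 - PowerSeries.C b1 * PowerSeries.X) * Y)
    (P Q : Polynomial ℂ) (hdP : P.degree ≤ m) (hdQ : Q.degree ≤ n)
    (hPade : (PowerSeries.X : PowerSeries ℂ) ^ (m + n + 1) ∣
      Y * (Q : PowerSeries ℂ) - (P : PowerSeries ℂ))
    (Pbar Qbar : Polynomial ℂ) (hdPbar : Pbar.degree ≤ m) (hdQbar : Qbar.degree ≤ n)
    (hPadebar : (PowerSeries.X : PowerSeries ℂ) ^ (m + n + 1) ∣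
      Ybar * (Qbar : PowerSeries ℂ) - (Pbar : PowerSeries ℂ)) :
    ∃ R : Polynomial ℂ, R.degree ≤ 1 ∧
      (1 - C a2 * X) * (1 - C a3 * X) * (P.comp (C q * X)) * Qbar -
          (1 - C b2 * X) * (1 - C b3 * X) * Pbar * (Q.comp (C q * X)) =
        X ^ (m + n + 1) * R := by
  set N := m + n + 1 with hN
  -- cancel (1 - a1 X)
  have hne : (1 - PowerSeries.C a1 * PowerSeries.X) ≠ 0 := by
    intro h
    have := congrArg (PowerSeries.constantCoeff) h
    simp at this
  have key : (1 - PowerSeries.C a2 * PowerSeries.X) * (1 - PowerSeries.C a3 * PowerSeries.X) *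
      PowerSeries.rescale q Y =
      (1 - PowerSeries.C b2 * PowerSeries.X) * (1 - PowerSeries.C b3 * PowerSeries.X) * Ybar := by
    apply mul_left_cancel₀ hne
    linear_combination hY - ((1 - PowerSeries.C b2 * PowerSeries.X) *
      (1 - PowerSeries.C b3 * PowerSeries.X)) * hYY
  -- rescaled Padé condition
  obtain ⟨T0, hT0⟩ := hPade
  obtain ⟨T2, hT2⟩ := hPadebar
  have hT1 : PowerSeries.rescale q Y * PowerSeries.rescale q (Q : PowerSeries ℂ) -
      PowerSeries.rescale q (P : PowerSeries ℂ) =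
      (PowerSeries.X : PowerSeries ℂ) ^ N * ((PowerSeries.C q) ^ N * PowerSeries.rescale q T0) := by
    have := congrArg (PowerSeries.rescale q) hT0
    simp only [map_sub, map_mul, map_pow, PowerSeries.rescale_X] at this
    rw [this, mul_pow]; ring
  set D : ℂ[X] := (1 - C a2 * X) * (1 - C a3 * X) * (P.comp (C q * X)) * Qbar -
      (1 - C b2 * X) * (1 - C b3 * X) * Pbar * (Q.comp (C q * X)) with hD
  have hDcoe : ((D : ℂ[X]) : PowerSeries ℂ) =
      (1 - PowerSeries.C a2 * PowerSeries.X) * (1 - PowerSeries.C a3 * PowerSeries.X) *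
        PowerSeries.rescale q (P : PowerSeries ℂ) * (Qbar : PowerSeries ℂ) -
      (1 - PowerSeries.C b2 * PowerSeries.X) * (1 - PowerSeries.C b3 * PowerSeries.X) *
        (Pbar : PowerSeries ℂ) * PowerSeries.rescale q (Q : PowerSeries ℂ) := by
    simp only [hD, Polynomial.coe_sub, Polynomial.coe_mul, Polynomial.coe_one, Polynomial.coe_X,
      Polynomial.coe_C, coe_comp_C_mul_X]
  have hdvd : (PowerSeries.X : PowerSeries ℂ) ^ N ∣ ((D : ℂ[X]) : PowerSeries ℂ) := by
    refine ⟨(1 - PowerSeries.C b2 * PowerSeries.X) * (1 - PowerSeries.C b3 * PowerSeries.X) *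
        T2 * PowerSeries.rescale q (Q : PowerSeries ℂ) -
      (1 - PowerSeries.C a2 * PowerSeries.X) * (1 - PowerSeries.C a3 * PowerSeries.X) *
        ((PowerSeries.C q) ^ N * PowerSeries.rescale q T0) * (Qbar : PowerSeries ℂ), ?_⟩
    rw [hDcoe]
    linear_combination (Qbar : PowerSeries ℂ) *
        (1 - PowerSeries.C a2 * PowerSeries.X) * (1 - PowerSeries.C a3 * PowerSeries.X) *
          (- hT1) +
      PowerSeries.rescale q (Q : PowerSeries ℂ) * (Qbar : PowerSeries ℂ) * key +
      PowerSeries.rescale q (Q : PowerSeries ℂ) *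
        (1 - PowerSeries.C b2 * PowerSeries.X) * (1 - PowerSeries.C b3 * PowerSeries.X) * hT2
  have hdvdp : (X : ℂ[X]) ^ N ∣ D := by
    rw [Polynomial.X_pow_dvd_iff]
    intro d hd
    have := (PowerSeries.X_pow_dvd_iff.mp hdvd) d hd
    rwa [Polynomial.coeff_coe] at this
  obtain ⟨R, hR⟩ := hdvdp
  refine ⟨R, ?_, hR⟩
  -- degree bound
  have hm : P.natDegree ≤ m := natDegree_le_iff_degree_le.mpr hdP
  have hn : Q.natDegree ≤ n := natDegree_le_iff_degree_le.mpr hdQ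
  have hmb : Pbar.natDegree ≤ m := natDegree_le_iff_degree_le.mpr hdPbar
  have hnb : Qbar.natDegree ≤ n := natDegree_le_iff_degree_le.mpr hdQbar
  rcases eq_or_ne R 0 with rfl | hR0
  · simp
  have hDne : D ≠ 0 := by
    rw [hR]; exact mul_ne_zero (pow_ne_zero _ X_ne_zero) hR0
  have haux : ∀ c : ℂ, (1 - C c * X).natDegree ≤ 1 := fun c =>
    (natDegree_sub_le _ _).trans (max_le (by simp) ((natDegree_C_mul_le c X).trans natDegree_X_le))
  have haux2 : (C q * X).natDegree ≤ 1 := (natDegree_C_mul_le q X).trans natDegree_X_le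
  have hdegD : D.natDegree ≤ N + 1 := by
    have h1 : ((1 - C a2 * X) * (1 - C a3 * X) * (P.comp (C q * X)) * Qbar).natDegree ≤
        1 + 1 + m + n := by
      refine (natDegree_mul_le.trans (add_le_add (natDegree_mul_le.trans (add_le_add
        (natDegree_mul_le.trans (add_le_add ?_ ?_)) ?_)) hnb))
      · exact haux a2
      · exact haux a3
      · exact natDegree_comp_le.trans (by
          calc P.natDegree * (C q * X).natDegree ≤ m * 1 := Nat.mul_le_mul hm haux2
          _ = m := mul_one m)
    have h2 : ((1 - C b2 * X) * (1 - C b3 * X) * Pbar * (Q.comp (C q * X))).natDegree ≤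
        1 + 1 + m + n := by
      refine (natDegree_mul_le.trans (add_le_add (natDegree_mul_le.trans (add_le_add
        (natDegree_mul_le.trans (add_le_add ?_ ?_)) hmb)) ?_))
      · exact haux b2
      · exact haux b3
      · exact natDegree_comp_le.trans (by
          calc Q.natDegree * (C q * X).natDegree ≤ n * 1 := Nat.mul_le_mul hn haux2
          _ = n := mul_one n)
    have := (natDegree_sub_le _ _).trans (max_le h1 h2)
    rw [← hD] at this
    omega
  have : D.natDegree = N + R.natDegree := by
    rw [hR, natDegree_mul (pow_ne_zero _ X_ne_zero) hR0, natDegree_X_pow]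
  rw [this] at hdegD
  have : R.natDegree ≤ 1 := by omega
  exact natDegree_le_iff_degree_le.mp this
end

section
/- (Casorati determinant D_1, type q-D_5^{(1)}.) Suppose Y ∈ ℂ[[X]] satisfies (1−a_1X)(1−a_2X)·Y(qX) = (1−b_1X)(1−b_2X)·Y, and let (P, Q) be a Padé pair for Y. Then there exists a polynomial R ∈ ℂ[X] with deg R ≤ 1 such that (1−b_1X)(1−b_2X)·P(X)·Q(qX) − (1−a_1X)(1−a_2X)·P(qX)·Q(X) = X^{m+n+1}·R. -/
open Polynomial

private lemma coeff_comp_CqX (P : Polynomial ℂ) (q : ℂ) (k : ℕ) :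
    (P.comp (C q * X)).coeff k = P.coeff k * q ^ k := by
  rw [Polynomial.comp, Polynomial.eval₂_eq_sum, Polynomial.sum, Polynomial.finset_sum_coeff]
  have hterm : ∀ e : ℕ, (C (P.coeff e) * (C q * X) ^ e).coeff k
      = if k = e then P.coeff e * q ^ e else 0 := by
    intro e
    rw [mul_pow, ← C_pow, ← mul_assoc, ← C_mul, Polynomial.coeff_C_mul_X_pow]
  simp only [hterm]
  rw [Finset.sum_ite_eq P.support k fun e => P.coeff e * q ^ e]
  by_cases hk : k ∈ P.support
  · simp [hk]
  · simp only [Polynomial.notMem_support_iff] at hk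
    simp [hk]

private lemma coe_comp_CqX (P : Polynomial ℂ) (q : ℂ) :
    ((P.comp (C q * X) : Polynomial ℂ) : PowerSeries ℂ) = PowerSeries.rescale q (P : PowerSeries ℂ) := by
  ext k
  rw [Polynomial.coeff_coe, PowerSeries.coeff_rescale, Polynomial.coeff_coe, coeff_comp_CqX]
  exact mul_comm _ _

private lemma degree_comp_CqX (P : Polynomial ℂ) (q : ℂ) :
    (P.comp (C q * X)).degree ≤ P.degree := by
  rw [Polynomial.degree_le_iff_coeff_zero]
  intro k hk
  rw [coeff_comp_CqX, Polynomial.coeff_eq_zero_of_degree_lt hk, zero_mul]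

/-- Casorati determinant `D_1` for type q-D_5^{(1)}. -/
theorem casorati_D1_qD5
    (q a1 a2 b1 b2 : ℂ) (m n : ℕ)
    (Y : PowerSeries ℂ)
    (hY : (1 - PowerSeries.C a1 * PowerSeries.X) * (1 - PowerSeries.C a2 * PowerSeries.X) *
        PowerSeries.rescale q Y =
      (1 - PowerSeries.C b1 * PowerSeries.X) * (1 - PowerSeries.C b2 * PowerSeries.X) * Y)
    (P Q : Polynomial ℂ) (hdP : P.degree ≤ m) (hdQ : Q.degree ≤ n)
    (hPade : (PowerSeries.X : PowerSeries ℂ) ^ (m + n + 1) ∣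
      Y * (Q : PowerSeries ℂ) - (P : PowerSeries ℂ)) :
    ∃ R : Polynomial ℂ, R.degree ≤ 1 ∧
      (1 - C b1 * X) * (1 - C b2 * X) * P * (Q.comp (C q * X)) -
          (1 - C a1 * X) * (1 - C a2 * X) * (P.comp (C q * X)) * Q =
        X ^ (m + n + 1) * R := by
  set N := m + n + 1 with hN
  set D : Polynomial ℂ :=
    (1 - C b1 * X) * (1 - C b2 * X) * P * (Q.comp (C q * X)) -
      (1 - C a1 * X) * (1 - C a2 * X) * (P.comp (C q * X)) * Q with hD
  have hlin : ∀ b : ℂ, (1 - C b * X : Polynomial ℂ).degree ≤ 1 := by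
    intro b
    refine le_trans (Polynomial.degree_sub_le _ _) (max_le ?_ (Polynomial.degree_C_mul_X_le b))
    exact le_trans Polynomial.degree_one_le (by norm_num)
  have hcast : (1 + 1 + (m : WithBot ℕ) + (n : WithBot ℕ)) = ((N + 1 : ℕ) : WithBot ℕ) := by
    rw [hN]
    push_cast
    abel
  have hdegD : D.degree ≤ ((N + 1 : ℕ) : WithBot ℕ) := by
    have h1 : ((1 - C b1 * X) * (1 - C b2 * X) * P * (Q.comp (C q * X))).degree
        ≤ ((N + 1 : ℕ) : WithBot ℕ) := by
      calc ((1 - C b1 * X) * (1 - C b2 * X) * P * (Q.comp (C q * X))).degree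
          ≤ (1 - C b1 * X).degree + (1 - C b2 * X).degree + P.degree
            + (Q.comp (C q * X)).degree :=
            le_trans (Polynomial.degree_mul_le _ _)
              (add_le_add (le_trans (Polynomial.degree_mul_le _ _)
                (add_le_add (Polynomial.degree_mul_le _ _) le_rfl)) le_rfl)
        _ ≤ 1 + 1 + (m : WithBot ℕ) + (n : WithBot ℕ) :=
            add_le_add (add_le_add (add_le_add (hlin b1) (hlin b2)) hdP)
              ((degree_comp_CqX Q q).trans hdQ)
        _ = ((N + 1 : ℕ) : WithBot ℕ) := hcast
    have h2 : ((1 - C a1 * X) * (1 - C a2 * X) * (P.comp (C q * X)) * Q).degree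
        ≤ ((N + 1 : ℕ) : WithBot ℕ) := by
      calc ((1 - C a1 * X) * (1 - C a2 * X) * (P.comp (C q * X)) * Q).degree
          ≤ (1 - C a1 * X).degree + (1 - C a2 * X).degree + (P.comp (C q * X)).degree
            + Q.degree :=
            le_trans (Polynomial.degree_mul_le _ _)
              (add_le_add (le_trans (Polynomial.degree_mul_le _ _)
                (add_le_add (Polynomial.degree_mul_le _ _) le_rfl)) le_rfl)
        _ ≤ 1 + 1 + (m : WithBot ℕ) + (n : WithBot ℕ) :=
            add_le_add (add_le_add (add_le_add (hlin a1) (hlin a2))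
              ((degree_comp_CqX P q).trans hdP)) hdQ
        _ = ((N + 1 : ℕ) : WithBot ℕ) := hcast
    exact le_trans (Polynomial.degree_sub_le _ _) (max_le h1 h2)
  -- divisibility of D by X^N, via power series
  obtain ⟨E, hE⟩ := hPade
  have hP : (P : PowerSeries ℂ) = Y * (Q : PowerSeries ℂ) - PowerSeries.X ^ N * E := by
    rw [← hE]; ring
  have hPr : ((P.comp (C q * X) : Polynomial ℂ) : PowerSeries ℂ)
      = PowerSeries.rescale q Y * PowerSeries.rescale q (Q : PowerSeries ℂ)
        - (PowerSeries.C q * PowerSeries.X) ^ N * PowerSeries.rescale q E := by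
    rw [coe_comp_CqX, hP, map_sub, map_mul, map_mul, map_pow, PowerSeries.rescale_X]
  have hQr : ((Q.comp (C q * X) : Polynomial ℂ) : PowerSeries ℂ)
      = PowerSeries.rescale q (Q : PowerSeries ℂ) := coe_comp_CqX Q q
  have hDps : (D : PowerSeries ℂ) = PowerSeries.X ^ N *
      ((1 - PowerSeries.C a1 * PowerSeries.X) * (1 - PowerSeries.C a2 * PowerSeries.X)
          * (PowerSeries.C q) ^ N * PowerSeries.rescale q E * (Q : PowerSeries ℂ)
        - (1 - PowerSeries.C b1 * PowerSeries.X) * (1 - PowerSeries.C b2 * PowerSeries.X)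
          * E * PowerSeries.rescale q (Q : PowerSeries ℂ)) := by
    rw [hD]
    push_cast
    rw [hPr, hQr, hP]
    have key : (1 - PowerSeries.C b1 * PowerSeries.X) * (1 - PowerSeries.C b2 * PowerSeries.X)
        * (Y * (Q : PowerSeries ℂ)) * PowerSeries.rescale q (Q : PowerSeries ℂ)
        = (1 - PowerSeries.C a1 * PowerSeries.X) * (1 - PowerSeries.C a2 * PowerSeries.X)
          * (PowerSeries.rescale q Y * PowerSeries.rescale q (Q : PowerSeries ℂ))
          * (Q : PowerSeries ℂ) := by
      have := hY
      calc (1 - PowerSeries.C b1 * PowerSeries.X) * (1 - PowerSeries.C b2 * PowerSeries.X)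
          * (Y * (Q : PowerSeries ℂ)) * PowerSeries.rescale q (Q : PowerSeries ℂ)
          = ((1 - PowerSeries.C b1 * PowerSeries.X) * (1 - PowerSeries.C b2 * PowerSeries.X)
            * Y) * ((Q : PowerSeries ℂ) * PowerSeries.rescale q (Q : PowerSeries ℂ)) := by ring
        _ = ((1 - PowerSeries.C a1 * PowerSeries.X) * (1 - PowerSeries.C a2 * PowerSeries.X)
            * PowerSeries.rescale q Y) * ((Q : PowerSeries ℂ)
            * PowerSeries.rescale q (Q : PowerSeries ℂ)) := by rw [hY]
        _ = _ := by ring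
    calc (1 - PowerSeries.C b1 * PowerSeries.X) * (1 - PowerSeries.C b2 * PowerSeries.X)
          * (Y * (Q : PowerSeries ℂ) - PowerSeries.X ^ N * E)
          * PowerSeries.rescale q (Q : PowerSeries ℂ)
        - (1 - PowerSeries.C a1 * PowerSeries.X) * (1 - PowerSeries.C a2 * PowerSeries.X)
          * (PowerSeries.rescale q Y * PowerSeries.rescale q (Q : PowerSeries ℂ)
            - (PowerSeries.C q * PowerSeries.X) ^ N * PowerSeries.rescale q E)
          * (Q : PowerSeries ℂ)
        = ((1 - PowerSeries.C b1 * PowerSeries.X) * (1 - PowerSeries.C b2 * PowerSeries.X)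
            * (Y * (Q : PowerSeries ℂ)) * PowerSeries.rescale q (Q : PowerSeries ℂ)
          - (1 - PowerSeries.C a1 * PowerSeries.X) * (1 - PowerSeries.C a2 * PowerSeries.X)
            * (PowerSeries.rescale q Y * PowerSeries.rescale q (Q : PowerSeries ℂ))
            * (Q : PowerSeries ℂ))
          + PowerSeries.X ^ N *
            ((1 - PowerSeries.C a1 * PowerSeries.X) * (1 - PowerSeries.C a2 * PowerSeries.X)
              * (PowerSeries.C q) ^ N * PowerSeries.rescale q E * (Q : PowerSeries ℂ)
            - (1 - PowerSeries.C b1 * PowerSeries.X) * (1 - PowerSeries.C b2 * PowerSeries.X)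
              * E * PowerSeries.rescale q (Q : PowerSeries ℂ)) := by ring
      _ = _ := by rw [key]; ring
  have hdvd : (X : Polynomial ℂ) ^ N ∣ D := by
    rw [Polynomial.X_pow_dvd_iff]
    intro d hd
    have : (PowerSeries.coeff d) (D : PowerSeries ℂ) = 0 := by
      rw [hDps]
      exact PowerSeries.X_pow_dvd_iff.mp ⟨_, rfl⟩ d hd
    rwa [Polynomial.coeff_coe] at this
  obtain ⟨R, hR⟩ := hdvd
  refine ⟨R, ?_, hR⟩
  by_cases hR0 : R = 0
  · simp [hR0]
  · have hXN : (X : Polynomial ℂ) ^ N ≠ 0 := pow_ne_zero _ Polynomial.X_ne_zero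
    have hnat : D.natDegree = N + R.natDegree := by
      rw [hR, Polynomial.natDegree_mul hXN hR0, Polynomial.natDegree_X_pow]
    have hDle : D.natDegree ≤ N + 1 := Polynomial.natDegree_le_of_degree_le hdegD
    rw [hnat] at hDle
    have h1 : R.natDegree ≤ 1 := by omega
    simpa using Polynomial.degree_le_of_natDegree_le h1
end

section
/- (Casorati determinant D_2, type q-D_5^{(1)}.) Suppose Y, Ȳ ∈ ℂ[[X]] satisfy (1−a_1X)·Ȳ = (1−b_1X)·Y, let (P, Q) be a Padé pair for Y and (P̄, Q̄) a Padé pair for Ȳ. Then there exists a constant c ∈ ℂ such that (1−b_1X)·P·Q̄ − (1−a_1X)·P̄·Q = c·X^{m+n+1}. -/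
open Polynomial

/-- Casorati determinant `D_2` for type q-D_5^{(1)}. -/
theorem casorati_D2_qD5
    (q a1 a2 b1 b2 : ℂ) (m n : ℕ)
    (Y Ybar : PowerSeries ℂ)
    (hYY : (1 - PowerSeries.C a1 * PowerSeries.X) * Ybar =
      (1 - PowerSeries.C b1 * PowerSeries.X) * Y)
    (P Q : Polynomial ℂ) (hdP : P.degree ≤ m) (hdQ : Q.degree ≤ n)
    (hPade : (PowerSeries.X : PowerSeries ℂ) ^ (m + n + 1) ∣
      Y * (Q : PowerSeries ℂ) - (P : PowerSeries ℂ))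
    (Pbar Qbar : Polynomial ℂ) (hdPbar : Pbar.degree ≤ m) (hdQbar : Qbar.degree ≤ n)
    (hPadebar : (PowerSeries.X : PowerSeries ℂ) ^ (m + n + 1) ∣
      Ybar * (Qbar : PowerSeries ℂ) - (Pbar : PowerSeries ℂ)) :
    ∃ c : ℂ,
      (1 - C b1 * X) * P * Qbar - (1 - C a1 * X) * Pbar * Q =
        C c * X ^ (m + n + 1) := by
  set N : ℕ := m + n + 1 with hN
  set D : Polynomial ℂ := (1 - C b1 * X) * P * Qbar - (1 - C a1 * X) * Pbar * Q with hD
  have key : (PowerSeries.X : PowerSeries ℂ) ^ N ∣ (D : PowerSeries ℂ) := by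
    have hcoe : (D : PowerSeries ℂ) =
        (1 - PowerSeries.C b1 * PowerSeries.X) * (Qbar : PowerSeries ℂ) *
          (-(Y * (Q : PowerSeries ℂ) - (P : PowerSeries ℂ))) +
        (1 - PowerSeries.C a1 * PowerSeries.X) * (Q : PowerSeries ℂ) *
          (Ybar * (Qbar : PowerSeries ℂ) - (Pbar : PowerSeries ℂ)) := by
      rw [hD]
      push_cast [Polynomial.coe_sub, Polynomial.coe_mul, Polynomial.coe_one,
        Polynomial.coe_X, Polynomial.coe_C]
      linear_combination -(Q : PowerSeries ℂ) * (Qbar : PowerSeries ℂ) * hYY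
    rw [hcoe]
    exact dvd_add (Dvd.dvd.mul_left (dvd_neg.mpr hPade) _) (Dvd.dvd.mul_left hPadebar _)
  have hlow : ∀ k < N, D.coeff k = 0 := by
    intro k hk
    have := (PowerSeries.X_pow_dvd_iff.mp key) k hk
    rwa [Polynomial.coeff_coe] at this
  have h1b : (1 - C b1 * X : ℂ[X]).degree ≤ 1 := by
    refine le_trans (degree_sub_le _ _) (max_le ?_ ?_)
    · exact le_trans degree_one_le (by norm_num)
    · exact le_trans (degree_mul_le _ _) (by simpa using add_le_add degree_C_le le_rfl)
  have h1a : (1 - C a1 * X : ℂ[X]).degree ≤ 1 := by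
    refine le_trans (degree_sub_le _ _) (max_le ?_ ?_)
    · exact le_trans degree_one_le (by norm_num)
    · exact le_trans (degree_mul_le _ _) (by simpa using add_le_add degree_C_le le_rfl)
  have hcast : ((1 : WithBot ℕ) + m + n) = (N : WithBot ℕ) := by
    rw [hN]; push_cast; ring
  have hA : ((1 - C b1 * X) * P * Qbar).degree ≤ (N : WithBot ℕ) := by
    rw [← hcast]
    exact le_trans (degree_mul_le _ _)
      (add_le_add (le_trans (degree_mul_le _ _) (add_le_add h1b hdP)) hdQbar)
  have hB : ((1 - C a1 * X) * Pbar * Q).degree ≤ (N : WithBot ℕ) := by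
    rw [← hcast]
    exact le_trans (degree_mul_le _ _)
      (add_le_add (le_trans (degree_mul_le _ _) (add_le_add h1a hdPbar)) hdQ)
  have hdeg : D.degree ≤ (N : WithBot ℕ) := by
    rw [hD]; exact le_trans (degree_sub_le _ _) (max_le hA hB)
  refine ⟨D.coeff N, ?_⟩
  show D = C (D.coeff N) * X ^ N
  ext k
  rw [coeff_C_mul, coeff_X_pow]
  rcases lt_trichotomy k N with h | h | h
  · rw [hlow k h, if_neg (by omega)]; ring
  · subst h; rw [if_pos rfl]; ring
  · rw [if_neg (by omega), coeff_eq_zero_of_degree_lt (lt_of_le_of_lt hdeg (by exact_mod_cast h))]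
    ring
end

section
/- (Casorati determinant D_1, type q-(A_2+A_1)^{(1)}.) Suppose Y ∈ ℂ[[X]] satisfies (1−a_1X)(1−a_2X)·Y(qX) = Y, and let (P, Q) be a Padé pair for Y. Then there exists a polynomial R ∈ ℂ[X] with deg R ≤ 1 such that P(X)·Q(qX) − (1−a_1X)(1−a_2X)·P(qX)·Q(X) = X^{m+n+1}·R. -/
open Polynomial

/-- Casorati determinant `D_1` for type q-(A_2+A_1)^{(1)}. -/
theorem casorati_D1_qA2A1
    (q a1 a2 : ℂ) (m n : ℕ)
    (Y : PowerSeries ℂ)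
    (hY : (1 - PowerSeries.C a1 * PowerSeries.X) * (1 - PowerSeries.C a2 * PowerSeries.X) *
        PowerSeries.rescale q Y = Y)
    (P Q : Polynomial ℂ) (hdP : P.degree ≤ m) (hdQ : Q.degree ≤ n)
    (hPade : (PowerSeries.X : PowerSeries ℂ) ^ (m + n + 1) ∣
      Y * (Q : PowerSeries ℂ) - (P : PowerSeries ℂ)) :
    ∃ R : Polynomial ℂ, R.degree ≤ 1 ∧
      P * (Q.comp (C q * X)) -
          (1 - C a1 * X) * (1 - C a2 * X) * (P.comp (C q * X)) * Q =
        X ^ (m + n + 1) * R := by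
  set N := m + n + 1 with hN
  set D : ℂ[X] := P * (Q.comp (C q * X)) -
      (1 - C a1 * X) * (1 - C a2 * X) * (P.comp (C q * X)) * Q with hD
  obtain ⟨u, hu⟩ := hPade
  set A : PowerSeries ℂ := (1 - PowerSeries.C a1 * PowerSeries.X) *
      (1 - PowerSeries.C a2 * PowerSeries.X) with hA
  have key : ((D : ℂ[X]) : PowerSeries ℂ)
      = A * PowerSeries.rescale q (PowerSeries.X ^ N * u) * (Q : PowerSeries ℂ)
        - (PowerSeries.X ^ N * u) * PowerSeries.rescale q (Q : PowerSeries ℂ) := by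
    have hcoeD : ((D : ℂ[X]) : PowerSeries ℂ) =
        (P : PowerSeries ℂ) * PowerSeries.rescale q (Q : PowerSeries ℂ)
        - A * PowerSeries.rescale q (P : PowerSeries ℂ) * (Q : PowerSeries ℂ) := by
      simp only [hD, Polynomial.coe_sub, Polynomial.coe_mul, Polynomial.coe_one,
        Polynomial.coe_X, Polynomial.coe_C, coe_comp_C_mul_X, hA]
      try ring
    have hP : (P : PowerSeries ℂ) = Y * (Q : PowerSeries ℂ) - PowerSeries.X ^ N * u := by
      rw [← hu]; ring
    have hrP : PowerSeries.rescale q (P : PowerSeries ℂ)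
        = PowerSeries.rescale q Y * PowerSeries.rescale q (Q : PowerSeries ℂ)
          - PowerSeries.rescale q (PowerSeries.X ^ N * u) := by
      rw [hP]; simp [map_sub, map_mul]
    rw [hcoeD, hrP, hP]
    have hYA : A * PowerSeries.rescale q Y = Y := hY
    linear_combination (-((Q : PowerSeries ℂ) * PowerSeries.rescale q (Q : PowerSeries ℂ))) * hYA
  -- divisibility of the coercion
  have hdvd : (PowerSeries.X : PowerSeries ℂ) ^ N ∣ ((D : ℂ[X]) : PowerSeries ℂ) := by
    rw [key]
    have h1 : (PowerSeries.X : PowerSeries ℂ) ^ N ∣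
        PowerSeries.rescale q (PowerSeries.X ^ N * u) := by
      rw [map_mul, map_pow, PowerSeries.rescale_X, mul_pow]
      exact Dvd.dvd.mul_right (Dvd.dvd.mul_left dvd_rfl _) _
    exact dvd_sub (Dvd.dvd.mul_right (Dvd.dvd.mul_left h1 _) _)
      (Dvd.dvd.mul_right (dvd_mul_right _ _) _)
  -- divisibility as polynomials
  have hdvdP : (X : ℂ[X]) ^ N ∣ D := by
    rw [Polynomial.X_pow_dvd_iff]
    intro d hd
    rw [PowerSeries.X_pow_dvd_iff] at hdvd
    have := hdvd d hd
    rwa [Polynomial.coeff_coe] at this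
  obtain ⟨R, hR⟩ := hdvdP
  refine ⟨R, ?_, hR⟩
  -- degree bound
  have hdP' : P.natDegree ≤ m := natDegree_le_iff_degree_le.2 hdP
  have hdQ' : Q.natDegree ≤ n := natDegree_le_iff_degree_le.2 hdQ
  have hcq : (C q * X : ℂ[X]).natDegree ≤ 1 := by
    apply natDegree_mul_le.trans; simp
  have hQc : (Q.comp (C q * X)).natDegree ≤ n := by
    refine natDegree_comp_le.trans ?_
    calc Q.natDegree * (C q * X).natDegree ≤ n * 1 := Nat.mul_le_mul hdQ' hcq
      _ = n := mul_one n
  have hPc : (P.comp (C q * X)).natDegree ≤ m := by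
    refine natDegree_comp_le.trans ?_
    calc P.natDegree * (C q * X).natDegree ≤ m * 1 := Nat.mul_le_mul hdP' hcq
      _ = m := mul_one m
  have hlin : ∀ a : ℂ, (1 - C a * X : ℂ[X]).natDegree ≤ 1 := by
    intro a
    refine (natDegree_sub_le _ _).trans ?_
    simp [natDegree_C_mul_le]
    exact (natDegree_mul_le).trans (by simp)
  have hDdeg : D.natDegree ≤ N + 1 := by
    refine (natDegree_sub_le _ _).trans ?_
    have h1 : (P * Q.comp (C q * X)).natDegree ≤ m + n :=
      natDegree_mul_le.trans (Nat.add_le_add hdP' hQc)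
    have h2 : ((1 - C a1 * X) * (1 - C a2 * X) * P.comp (C q * X) * Q).natDegree ≤ N + 1 := by
      refine natDegree_mul_le.trans ?_
      have : ((1 - C a1 * X) * (1 - C a2 * X) * P.comp (C q * X)).natDegree ≤ 2 + m := by
        refine natDegree_mul_le.trans ?_
        have : ((1 - C a1 * X) * (1 - C a2 * X)).natDegree ≤ 2 :=
          natDegree_mul_le.trans (Nat.add_le_add (hlin a1) (hlin a2))
        exact Nat.add_le_add this hPc
      calc ((1 - C a1 * X) * (1 - C a2 * X) * P.comp (C q * X)).natDegree + Q.natDegree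
          ≤ (2 + m) + n := Nat.add_le_add this hdQ'
        _ = N + 1 := by omega
    exact max_le (h1.trans (by omega)) h2
  rcases eq_or_ne R 0 with rfl | hR0
  · simp
  have hDne : D ≠ 0 := by
    intro h0
    rw [h0] at hR
    have := (mul_eq_zero.1 hR.symm).resolve_left (pow_ne_zero _ X_ne_zero)
    exact hR0 this
  have : D.natDegree = N + R.natDegree := by
    rw [hR, natDegree_mul (pow_ne_zero _ X_ne_zero) hR0, natDegree_X_pow]
  have hRnat : R.natDegree ≤ 1 := by omega
  exact natDegree_le_iff_degree_le.1 hRnat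
end

section
/- (Casorati determinant D_2, type q-(A_2+A_1)^{(1)}.) Suppose Y, Ȳ ∈ ℂ[[X]] satisfy (1−a_1X)·Ȳ = Y, let (P, Q) be a Padé pair for Y and (P̄, Q̄) a Padé pair for Ȳ. Then there exists a constant c ∈ ℂ such that P·Q̄ − (1−a_1X)·P̄·Q = c·X^{m+n+1}. -/
open Polynomial

/-- Casorati determinant `D_2` for type q-(A_2+A_1)^{(1)}. -/
theorem casorati_D2_qA2A1
    (q a1 a2 : ℂ) (m n : ℕ)
    (Y Ybar : PowerSeries ℂ)
    (hYY : (1 - PowerSeries.C a1 * PowerSeries.X) * Ybar = Y)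
    (P Q : Polynomial ℂ) (hdP : P.degree ≤ m) (hdQ : Q.degree ≤ n)
    (hPade : (PowerSeries.X : PowerSeries ℂ) ^ (m + n + 1) ∣
      Y * (Q : PowerSeries ℂ) - (P : PowerSeries ℂ))
    (Pbar Qbar : Polynomial ℂ) (hdPbar : Pbar.degree ≤ m) (hdQbar : Qbar.degree ≤ n)
    (hPadebar : (PowerSeries.X : PowerSeries ℂ) ^ (m + n + 1) ∣
      Ybar * (Qbar : PowerSeries ℂ) - (Pbar : PowerSeries ℂ)) :
    ∃ c : ℂ,
      P * Qbar - (1 - C a1 * X) * Pbar * Q = C c * X ^ (m + n + 1) := by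
  set N := m + n + 1 with hN
  set D : Polynomial ℂ := P * Qbar - (1 - C a1 * X) * Pbar * Q with hD
  have hdeg1 : (1 - C a1 * X : Polynomial ℂ).degree ≤ 1 := by
    apply le_trans (degree_sub_le _ _)
    apply max_le
    · exact le_trans degree_one_le (by norm_num)
    · exact le_trans (degree_mul_le _ _)
        (by simpa using add_le_add degree_C_le (le_refl (degree (X : Polynomial ℂ))))
  have hdeg : D.degree ≤ (N : ℕ) := by
    apply le_trans (degree_sub_le _ _)
    apply max_le
    · apply le_trans (degree_mul_le _ _)
      calc P.degree + Qbar.degree ≤ (m : WithBot ℕ) + n := add_le_add hdP hdQbar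
        _ ≤ N := by
          rw [hN]
          norm_cast
          omega
    · apply le_trans (degree_mul_le _ _)
      apply le_trans (add_le_add (le_trans (degree_mul_le _ _)
        (add_le_add hdeg1 hdPbar)) hdQ)
      rw [hN]
      norm_cast
      omega
  have hdvd : (PowerSeries.X : PowerSeries ℂ) ^ N ∣ (D : PowerSeries ℂ) := by
    have hco : (D : PowerSeries ℂ) =
        (1 - PowerSeries.C a1 * PowerSeries.X) * (Ybar * (Qbar : PowerSeries ℂ) - (Pbar : PowerSeries ℂ)) * (Q : PowerSeries ℂ)
          - (Y * (Q : PowerSeries ℂ) - (P : PowerSeries ℂ)) * (Qbar : PowerSeries ℂ) := by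
      rw [hD]
      push_cast
      rw [← hYY]
      ring
    rw [hco]
    exact dvd_sub ((hPadebar.mul_left _).mul_right _) (hPade.mul_right _)
  have hc : ∀ k, k < N → D.coeff k = 0 := by
    intro k hk
    have := (PowerSeries.X_pow_dvd_iff.mp hdvd) k hk
    simpa [Polynomial.coeff_coe] using this
  refine ⟨D.coeff N, ?_⟩
  ext k
  rw [coeff_C_mul, coeff_X_pow]
  rcases lt_trichotomy k N with h | h | h
  · simp [hc k h, h.ne]
  · simp [h]
  · rw [coeff_eq_zero_of_degree_lt (lt_of_le_of_lt hdeg (by exact_mod_cast h))]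
    simp [ne_of_gt h]
end

section
/- (Casorati determinant D_3, type q-(A_2+A_1)^{(1)}.) Suppose Y, Ȳ ∈ ℂ[[X]] satisfy both (1−a_1X)(1−a_2X)·Y(qX) = Y and (1−a_1X)·Ȳ = Y, let (P, Q) be a Padé pair for Y and (P̄, Q̄) a Padé pair for Ȳ. Then there exists a constant c ∈ ℂ such that (1−a_2X)·P(qX)·Q̄(X) − P̄(X)·Q(qX) = c·X^{m+n+1}. -/
open Polynomial

lemma coeff_comp_CmulX (P : ℂ[X]) (q : ℂ) (k : ℕ) :
    (P.comp (C q * X)).coeff k = q ^ k * P.coeff k := by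
  rw [comp_eq_sum_left, Polynomial.sum_def]
  simp only [mul_pow, ← C_pow, ← mul_assoc, ← C_mul, finset_sum_coeff, coeff_C_mul,
    coeff_X_pow]
  rw [Finset.sum_eq_single k]
  · by_cases h : k ∈ P.support
    · simp [mul_comm]
    · simp [Polynomial.notMem_support_iff.mp h]
  · intro b _ hb; simp [Ne.symm hb]
  · intro h; simp [Polynomial.notMem_support_iff.mp h]

lemma coe_comp_CmulX (P : ℂ[X]) (q : ℂ) :
    ((P.comp (C q * X) : ℂ[X]) : PowerSeries ℂ) = PowerSeries.rescale q (P : PowerSeries ℂ) := by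
  ext k
  rw [Polynomial.coeff_coe, PowerSeries.coeff_rescale, Polynomial.coeff_coe,
    coeff_comp_CmulX]

lemma degree_comp_CmulX_le {P : ℂ[X]} {q : ℂ} {m : ℕ} (h : P.degree ≤ m) :
    (P.comp (C q * X)).degree ≤ m := by
  rw [degree_le_iff_coeff_zero] at h ⊢
  intro k hk
  rw [coeff_comp_CmulX, h k hk, mul_zero]

/-- Casorati determinant `D_3` for type q-(A_2+A_1)^{(1)}. -/
theorem casorati_D3_qA2A1
    (q a1 a2 : ℂ) (m n : ℕ)
    (Y Ybar : PowerSeries ℂ)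
    (hY : (1 - PowerSeries.C a1 * PowerSeries.X) * (1 - PowerSeries.C a2 * PowerSeries.X) *
        PowerSeries.rescale q Y = Y)
    (hYY : (1 - PowerSeries.C a1 * PowerSeries.X) * Ybar = Y)
    (P Q : Polynomial ℂ) (hdP : P.degree ≤ m) (hdQ : Q.degree ≤ n)
    (hPade : (PowerSeries.X : PowerSeries ℂ) ^ (m + n + 1) ∣
      Y * (Q : PowerSeries ℂ) - (P : PowerSeries ℂ))
    (Pbar Qbar : Polynomial ℂ) (hdPbar : Pbar.degree ≤ m) (hdQbar : Qbar.degree ≤ n)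
    (hPadebar : (PowerSeries.X : PowerSeries ℂ) ^ (m + n + 1) ∣
      Ybar * (Qbar : PowerSeries ℂ) - (Pbar : PowerSeries ℂ)) :
    ∃ c : ℂ,
      (1 - C a2 * X) * (P.comp (C q * X)) * Qbar - Pbar * (Q.comp (C q * X)) =
        C c * X ^ (m + n + 1) := by
  set N := m + n + 1 with hN
  set D : ℂ[X] := (1 - C a2 * X) * (P.comp (C q * X)) * Qbar - Pbar * (Q.comp (C q * X))
    with hD
  -- Step 1: X^N divides D as a power series
  obtain ⟨S, hS⟩ := hPade
  obtain ⟨Sb, hSb⟩ := hPadebar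
  have hS' : PowerSeries.rescale q Y * PowerSeries.rescale q (Q : PowerSeries ℂ) -
      PowerSeries.rescale q (P : PowerSeries ℂ) =
      (PowerSeries.C q * PowerSeries.X) ^ N * PowerSeries.rescale q S := by
    have := congrArg (PowerSeries.rescale q) hS
    simpa [map_mul, map_sub, map_pow, PowerSeries.rescale_X] using this
  set u : PowerSeries ℂ := 1 - PowerSeries.C a1 * PowerSeries.X with hu
  set v : PowerSeries ℂ := 1 - PowerSeries.C a2 * PowerSeries.X with hv
  have hDps : (D : PowerSeries ℂ) =
      v * PowerSeries.rescale q (P : PowerSeries ℂ) * (Qbar : PowerSeries ℂ) -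
        (Pbar : PowerSeries ℂ) * PowerSeries.rescale q (Q : PowerSeries ℂ) := by
    rw [hD]
    push_cast [Polynomial.coe_sub, Polynomial.coe_mul, Polynomial.coe_one, Polynomial.coe_C,
      Polynomial.coe_X, coe_comp_CmulX]
    rw [hv]
  have key : u * (D : PowerSeries ℂ) =
      PowerSeries.X ^ N *
        (u * Sb * PowerSeries.rescale q (Q : PowerSeries ℂ) -
          (PowerSeries.C q) ^ N * u * v * PowerSeries.rescale q S * (Qbar : PowerSeries ℂ)) := by
    rw [hDps]
    have hCX : (PowerSeries.C q * PowerSeries.X) ^ N =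
        (PowerSeries.C q) ^ N * PowerSeries.X ^ N := mul_pow _ _ _
    linear_combination
      (-(u * v * (Qbar : PowerSeries ℂ))) * hS' +
      (u * PowerSeries.rescale q (Q : PowerSeries ℂ)) * hSb +
      (PowerSeries.rescale q (Q : PowerSeries ℂ) * (Qbar : PowerSeries ℂ)) * hY -
      ((Qbar : PowerSeries ℂ) * PowerSeries.rescale q (Q : PowerSeries ℂ)) * hYY +
      (-(u * v * PowerSeries.rescale q S * (Qbar : PowerSeries ℂ))) * hCX
  have hUnit : IsUnit u := by
    have hc : PowerSeries.constantCoeff u = 1 := by rw [hu]; simp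
    rw [PowerSeries.isUnit_iff_constantCoeff, hc]
    exact isUnit_one
  have hdvd : (PowerSeries.X : PowerSeries ℂ) ^ N ∣ (D : PowerSeries ℂ) := by
    have h1 : (PowerSeries.X : PowerSeries ℂ) ^ N ∣ u * (D : PowerSeries ℂ) :=
      ⟨_, key⟩
    obtain ⟨w, hwu⟩ := hUnit.exists_left_inv
    obtain ⟨t, ht⟩ := h1
    exact ⟨w * t, by
      calc (D : PowerSeries ℂ) = w * (u * D) := by rw [← mul_assoc, hwu, one_mul]
        _ = PowerSeries.X ^ N * (w * t) := by rw [ht]; ring⟩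
  have hcoeff : ∀ k < N, D.coeff k = 0 := by
    intro k hk
    have := (PowerSeries.X_pow_dvd_iff.mp hdvd) k hk
    rwa [Polynomial.coeff_coe] at this
  -- Step 2: degree bound
  have hdeg : D.degree ≤ N := by
    apply (degree_sub_le _ _).trans
    apply max_le
    · apply (degree_mul_le _ _).trans
      have h1 : (1 - C a2 * X : ℂ[X]).degree ≤ 1 := by
        apply (degree_sub_le _ _).trans
        apply max_le
        · exact degree_one_le.trans (by norm_num)
        · exact (degree_mul_le _ _).trans (by
            calc (C a2).degree + (X : ℂ[X]).degree ≤ 0 + 1 :=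
              add_le_add degree_C_le degree_X_le
            _ = 1 := by norm_num)
      calc ((1 - C a2 * X : ℂ[X]) * P.comp (C q * X)).degree + Qbar.degree
          ≤ ((1 - C a2 * X : ℂ[X]).degree + (P.comp (C q * X)).degree) + Qbar.degree :=
            add_le_add (degree_mul_le _ _) le_rfl
        _ ≤ (1 + (m : WithBot ℕ)) + (n : WithBot ℕ) := by
            apply add_le_add (add_le_add h1 (degree_comp_CmulX_le hdP)) hdQbar
        _ = ((N : ℕ) : WithBot ℕ) := by
            rw [hN]; push_cast; ring
    · calc (Pbar * Q.comp (C q * X)).degree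
          ≤ Pbar.degree + (Q.comp (C q * X)).degree := degree_mul_le _ _
        _ ≤ (m : WithBot ℕ) + (n : WithBot ℕ) :=
          add_le_add hdPbar (degree_comp_CmulX_le hdQ)
        _ ≤ ((N : ℕ) : WithBot ℕ) := by
            rw [hN]; push_cast
            exact le_add_of_nonneg_right (by norm_num)
  -- Step 3: conclude
  refine ⟨D.coeff N, ?_⟩
  show D = C (D.coeff N) * X ^ N
  ext k
  rw [coeff_C_mul, coeff_X_pow]
  rcases lt_trichotomy k N with h | h | h
  · rw [hcoeff k h, if_neg h.ne, mul_zero]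
  · rw [h, if_pos rfl, mul_one]
  · rw [coeff_eq_zero_of_degree_lt (hdeg.trans_lt (by exact_mod_cast h)), if_neg h.ne',
      mul_zero]
end
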